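/- Let n ≥ 1 and let F₁,…,Fₙ : [0,1] → [0,1] be continuous, strictly increasing functions with Fᵢ(0)=0 and Fᵢ(1)=1 (hungry agents' cumulative value functions). If for every t ∈ {1,…,n−1} all agents have the same t/n-mark (i.e., the unique point zₜ with Fᵢ(zₜ)=t/n is the same for all i), then no connected strongly-proportional allocation exists: for every choice of cut points 0 = x₀ ≤ x₁ ≤ ⋯ ≤ xₙ = 1 and every bijection σ : {1,…,n} → {1,…,n} assigning piece [x_{k−1}, x_k] to agent σ(k), some agent i = σ(k) has Fᵢ(x_k) − Fᵢ(x_{k−1}) ≤ 1/n. -/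

import Mathlib

open Set

theorem stmt0 (n : ℕ) (hn : 1 ≤ n) (F : Fin n → ℝ → ℝ)
    (hcont : ∀ i, ContinuousOn (F i) (Icc 0 1))
    (hmono : ∀ i, StrictMonoOn (F i) (Icc 0 1))
    (h0 : ∀ i, F i 0 = 0) (h1 : ∀ i, F i 1 = 1)
    (hsame : ∀ t : ℕ, 0 < t → t < n →
      ∃ z ∈ Icc (0:ℝ) 1, ∀ i, F i z = (t : ℝ) / (n : ℝ)) :
    ∀ x : Fin (n+1) → ℝ, Monotone x → x 0 = 0 → x (Fin.last n) = 1 →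
      ∀ σ : Equiv.Perm (Fin n), ∃ k : Fin n,
        F (σ k) (x k.succ) - F (σ k) (x k.castSucc) ≤ 1 / (n : ℝ) := by
  intro x hm hx0 hx1 σ
  by_contra hcon
  push_neg at hcon
  have hnR : (0:ℝ) < (n:ℝ) := by exact_mod_cast hn
  have hx01 : ∀ k : Fin (n+1), x k ∈ Icc (0:ℝ) 1 := fun k =>
    ⟨hx0 ▸ hm (Fin.zero_le k), hx1 ▸ hm (Fin.le_last k)⟩
  -- key claim
  have key : ∀ k : ℕ, 1 ≤ k → ∀ hk : k < n, ∀ i,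
      (k : ℝ) / n < F i (x ⟨k, by omega⟩) := by
    intro k
    induction k with
    | zero => omega
    | succ k ih =>
      intro _ hk i
      have hkn : k < n := by omega
      have hgt : 1 / (n:ℝ) < F (σ ⟨k, hkn⟩) (x ⟨k+1, by omega⟩)
          - F (σ ⟨k, hkn⟩) (x ⟨k, by omega⟩) := hcon ⟨k, hkn⟩
      have hlow : (k : ℝ) / n ≤ F (σ ⟨k, hkn⟩) (x ⟨k, by omega⟩) := by
        rcases Nat.eq_zero_or_pos k with h | h
        · subst h
          simp only [Fin.mk_zero, hx0, h0, Nat.cast_zero, zero_div, le_refl]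
        · exact le_of_lt (ih h (by omega) (σ ⟨k, hkn⟩))
      have hF : ((k:ℝ)+1) / n < F (σ ⟨k, hkn⟩) (x ⟨k+1, by omega⟩) := by
        have := lt_of_lt_of_le (add_lt_add_right hgt ((k:ℝ)/n))
          (add_le_add_left hlow _)
        have h2 : F (σ ⟨k, hkn⟩) (x ⟨k+1, by omega⟩) =
            (F (σ ⟨k, hkn⟩) (x ⟨k+1, by omega⟩) - F (σ ⟨k, hkn⟩) (x ⟨k, by omega⟩))
              + F (σ ⟨k, hkn⟩) (x ⟨k, by omega⟩) := by ring
        rw [h2]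
        calc ((k:ℝ)+1) / n = 1/n + (k:ℝ)/n := by rw [add_div]; ring
        _ < _ := by linarith [this]
      obtain ⟨z, hz01, hzval⟩ := hsame (k+1) (by omega) hk
      have hzlt : z < x ⟨k+1, by omega⟩ := by
        rw [← (hmono (σ ⟨k, hkn⟩)).lt_iff_lt hz01 (hx01 _)]
        rw [hzval (σ ⟨k, hkn⟩)]
        push_cast
        exact hF
      have h3 := (hmono i) hz01 (hx01 (⟨k+1, by omega⟩ : Fin (n+1))) hzlt
      have h4 : F i z = ((k:ℝ)+1) / n := by rw [hzval i]; push_cast; ring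
      rw [h4] at h3
      push_cast
      exact h3
  -- final contradiction
  have hn1 : n - 1 < n := by omega
  set p : Fin n := ⟨n-1, hn1⟩ with hp
  have hps : p.succ = Fin.last n := by
    ext; simp [hp, Fin.last]; omega
  have hgt := hcon p
  rw [hps, hx1, h1] at hgt
  have hlow : ((n:ℝ) - 1) / n ≤ F (σ p) (x p.castSucc) := by
    rcases Nat.eq_zero_or_pos (n-1) with h | h
    · have hc : p.castSucc = 0 := by
        ext; simp [hp]; omega
      rw [hc, hx0, h0]
      have : n = 1 := by omega
      rw [this]; norm_num
    · have hkey := le_of_lt (key (n-1) h hn1 (σ p))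
      have hc : p.castSucc = (⟨n-1, by omega⟩ : Fin (n+1)) := rfl
      rw [hc]
      calc ((n:ℝ)-1)/n = ((n-1:ℕ):ℝ)/n := by rw [Nat.cast_sub hn]; norm_num
      _ ≤ _ := hkey
  have hone : (1:ℝ)/n + ((n:ℝ)-1)/n = 1 := by field_simp; ring
  linarith
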